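/- Let 0 < λ < 1 and let γ satisfy 0 ≤ γ ≤ (b(K) − λ c(K))/(1+λ). Suppose p_0 ∈ [0,1] satisfies max{ (λ c(K) + (1+λ)γ)/((1−λ²) b(K)) − λ²/(1−λ²), 0 } ≤ p_0 ≤ min{ γ/((1−λ) b(K)), 1 }, and define p(y) := (λ c(y) + (1+λ)γ)/(λ² b(K)) − ((1−λ²)/λ²) p_0 for y ∈ [0,K]. Then 0 ≤ p(y) ≤ 1 for all y ∈ [0,K], and the two-point memory-one strategy σ_X^0 = p_0 δ_K + (1−p_0) δ_0, σ_X[x,y] = p(y) δ_K + (1−p(y)) δ_0 satisfies, with ψ(s) := b(s), the identity (b(x) − γ) + λ(−c(y) − γ) = ψ(x) − λ² ∫ ψ dσ_X[x,y] − (1−λ²) ∫ ψ dσ_X^0 for all x, y ∈ [0,K]. Consequently, in the strictly-alternating continuous Donation Game in which X moves first, this strategy is an equalizer that unilaterally enforces π_Y = γ. -/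

import Mathlib

open MeasureTheory

set_option maxHeartbeats 1000000

lemma my_integrable_dirac {α : Type*} [MeasurableSpace α] {f : α → ℝ}
    (hf : StronglyMeasurable f) (A : α) : Integrable f (Measure.dirac A) := by
  refine ⟨hf.aestronglyMeasurable, ?_⟩
  show (∫⁻ a, ‖f a‖₊ ∂Measure.dirac A) < ⊤
  rw [lintegral_dirac' A (by measurability)]
  exact ENNReal.coe_lt_top

lemma my_twoPoint_integral {α : Type*} [MeasurableSpace α] {f : α → ℝ}
    (hf : StronglyMeasurable f) {a a' : ℝ} (ha : 0 ≤ a) (ha' : 0 ≤ a') (A B : α) :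
    ∫ x, f x ∂(ENNReal.ofReal a • Measure.dirac A + ENNReal.ofReal a' • Measure.dirac B)
      = a * f A + a' * f B := by
  rw [integral_add_measure ((my_integrable_dirac hf A).smul_measure ENNReal.ofReal_ne_top)
      ((my_integrable_dirac hf B).smul_measure ENNReal.ofReal_ne_top),
    integral_smul_measure, integral_smul_measure,
    integral_dirac' _ _ hf, integral_dirac' _ _ hf,
    ENNReal.toReal_ofReal ha, ENNReal.toReal_ofReal ha']
  simp [smul_eq_mul]

theorem stmt_15
    (K : ℝ) (hK : 0 < K) (b c : ℝ → ℝ)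
    (hbC : ContinuousOn b (Set.Icc 0 K)) (hcC : ContinuousOn c (Set.Icc 0 K))
    (hbM : MonotoneOn b (Set.Icc 0 K)) (hcM : MonotoneOn c (Set.Icc 0 K))
    (hb0 : b 0 = 0) (hc0 : c 0 = 0)
    (hcb : ∀ s ∈ Set.Ioc (0 : ℝ) K, c s < b s)
    (hcpos : ∀ s ∈ Set.Ioc (0 : ℝ) K, 0 < c s)
    (lam : ℝ) (hlam0 : 0 < lam) (hlam1 : lam < 1)
    (γ : ℝ) (hγ0 : 0 ≤ γ) (hγ1 : γ ≤ (b K - lam * c K) / (1 + lam))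
    (p0 : ℝ)
    (hp0lb : max ((lam * c K + (1 + lam) * γ) / ((1 - lam ^ 2) * b K)
        - lam ^ 2 / (1 - lam ^ 2)) 0 ≤ p0)
    (hp0ub : p0 ≤ min (γ / ((1 - lam) * b K)) 1)
    (p : Set.Icc (0 : ℝ) K → ℝ)
    (hp : ∀ y : Set.Icc (0 : ℝ) K,
      p y = (lam * c ↑y + (1 + lam) * γ) / (lam ^ 2 * b K)
        - ((1 - lam ^ 2) / lam ^ 2) * p0)
    (σX0 : Measure (Set.Icc (0 : ℝ) K))
    (hσX0 : σX0 =
      ENNReal.ofReal p0 • Measure.dirac (⟨K, Set.right_mem_Icc.mpr hK.le⟩ : Set.Icc (0 : ℝ) K)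
        + ENNReal.ofReal (1 - p0) • Measure.dirac (⟨0, Set.left_mem_Icc.mpr hK.le⟩ : Set.Icc (0 : ℝ) K))
    (σX : Set.Icc (0 : ℝ) K × Set.Icc (0 : ℝ) K → Measure (Set.Icc (0 : ℝ) K))
    (hσX : ∀ q : Set.Icc (0 : ℝ) K × Set.Icc (0 : ℝ) K, σX q =
      ENNReal.ofReal (p q.2) • Measure.dirac (⟨K, Set.right_mem_Icc.mpr hK.le⟩ : Set.Icc (0 : ℝ) K)
        + ENNReal.ofReal (1 - p q.2) • Measure.dirac (⟨0, Set.left_mem_Icc.mpr hK.le⟩ : Set.Icc (0 : ℝ) K)) :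
    (∀ y : Set.Icc (0 : ℝ) K, 0 ≤ p y ∧ p y ≤ 1) ∧
    (∀ x y : Set.Icc (0 : ℝ) K,
      (b ↑x - γ) + lam * (-(c ↑y) - γ) =
        b ↑x - lam ^ 2 * (∫ s, b ↑s ∂(σX (x, y)))
          - (1 - lam ^ 2) * (∫ s, b ↑s ∂σX0)) ∧
    (∀ ν : ℕ → Measure (Set.Icc (0 : ℝ) K × Set.Icc (0 : ℝ) K),
      (∀ t, IsProbabilityMeasure (ν t)) →
      (∀ E : Set (Set.Icc (0 : ℝ) K), MeasurableSet E →
        ν 0 (E ×ˢ Set.univ) = σX0 E) →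
      (∀ (t : ℕ) (E : Set (Set.Icc (0 : ℝ) K)), MeasurableSet E →
        ν (t + 1) (E ×ˢ Set.univ) = ∫⁻ q, σX q E ∂(ν t)) →
      (1 - lam) * ∑' t : ℕ, lam ^ (2 * t) *
          ∫ q, (b ↑q.1 + lam * (-(c ↑q.2))) ∂(ν t) = γ) := by
  have hcK : 0 < c K := hcpos K ⟨hK, le_rfl⟩
  have hbK : 0 < b K := hcK.trans (hcb K ⟨hK, le_rfl⟩)
  have hlam2 : (0:ℝ) < lam ^ 2 := by positivity
  have h1l2 : (0:ℝ) < 1 - lam ^ 2 := by nlinarith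
  have h1l : (0:ℝ) < 1 - lam := by linarith
  have h1pl : (0:ℝ) < 1 + lam := by linarith
  have hp00 : 0 ≤ p0 := le_trans (le_max_right _ _) hp0lb
  have hp01 : p0 ≤ 1 := hp0ub.trans (min_le_right _ _)
  -- p0 upper bound consequence
  have hA : p0 * ((1 - lam) * b K) ≤ γ :=
    (le_div_iff₀ (by positivity)).mp (hp0ub.trans (min_le_left _ _))
  -- p0 lower bound consequence
  have hB : lam * c K + (1 + lam) * γ - lam ^ 2 * b K ≤ (1 - lam ^ 2) * b K * p0 := by
    have h2 := le_trans (le_max_left _ _) hp0lb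
    have h3 : (lam * c K + (1 + lam) * γ) / ((1 - lam ^ 2) * b K)
        ≤ p0 + lam ^ 2 / (1 - lam ^ 2) := by linarith
    have h4 : lam * c K + (1 + lam) * γ
        ≤ (p0 + lam ^ 2 / (1 - lam ^ 2)) * ((1 - lam ^ 2) * b K) :=
      (div_le_iff₀ (by positivity)).mp h3
    have h5 : (p0 + lam ^ 2 / (1 - lam ^ 2)) * ((1 - lam ^ 2) * b K)
        = p0 * ((1 - lam ^ 2) * b K) + lam ^ 2 * b K := by
      field_simp
    nlinarith
  have hcy0 : ∀ y : Set.Icc (0:ℝ) K, 0 ≤ c ↑y := by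
    intro y
    have := hcM (Set.left_mem_Icc.mpr hK.le) y.2 y.2.1
    rwa [hc0] at this
  have hcyK : ∀ y : Set.Icc (0:ℝ) K, c ↑y ≤ c K := fun y =>
    hcM y.2 (Set.right_mem_Icc.mpr hK.le) y.2.2
  -- key algebraic identity
  have keyE : ∀ y : Set.Icc (0:ℝ) K,
      lam ^ 2 * b K * p y = lam * c ↑y + (1 + lam) * γ - (1 - lam ^ 2) * b K * p0 := by
    intro y
    rw [hp y]
    field_simp
  -- Part 1
  have hpbound : ∀ y : Set.Icc (0:ℝ) K, 0 ≤ p y ∧ p y ≤ 1 := by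
    intro y
    have hk := keyE y
    have hAy := mul_le_mul_of_nonneg_left hA h1pl.le
    have hring : (1 + lam) * (p0 * ((1 - lam) * b K)) = (1 - lam ^ 2) * b K * p0 := by ring
    constructor
    · nlinarith [mul_nonneg hlam0.le (hcy0 y), mul_pos hlam2 hbK]
    · nlinarith [hB, mul_le_mul_of_nonneg_left (hcyK y) hlam0.le, mul_pos hlam2 hbK]
  have hbR : Continuous (fun s : Set.Icc (0:ℝ) K => b ↑s) := hbC.restrict
  have hcR : Continuous (fun s : Set.Icc (0:ℝ) K => c ↑s) := hcC.restrict
  have hbSM : StronglyMeasurable (fun s : Set.Icc (0:ℝ) K => b ↑s) := hbR.stronglyMeasurable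
  -- integral against the two-point measures
  have hintσX : ∀ q : Set.Icc (0:ℝ) K × Set.Icc (0:ℝ) K,
      ∫ s, b ↑s ∂(σX q) = p q.2 * b K := by
    intro q
    rw [hσX q, my_twoPoint_integral hbSM (hpbound q.2).1 (by linarith [(hpbound q.2).2]) _ _]
    simp [hb0]
  have hintσX0 : ∫ s, b ↑s ∂σX0 = p0 * b K := by
    rw [hσX0, my_twoPoint_integral hbSM hp00 (by linarith) _ _]
    simp [hb0]
  refine ⟨hpbound, ?_, ?_⟩
  -- Part 2
  · intro x y
    rw [hintσX (x, y), hintσX0]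
    have := keyE y
    nlinarith [this]
  -- Part 3
  · intro ν hνP hν0 hνrec
    have hpcont : Continuous fun y : Set.Icc (0:ℝ) K => p y := by
      have h : (fun y : Set.Icc (0:ℝ) K => p y)
          = fun y : Set.Icc (0:ℝ) K => (lam * c ↑y + (1 + lam) * γ) / (lam ^ 2 * b K)
            - ((1 - lam ^ 2) / lam ^ 2) * p0 := by
        funext y; exact hp y
      rw [h]
      exact (((continuous_const.mul hcR).add continuous_const).div_const _).sub continuous_const
    have intb : ∀ t, Integrable (fun q : Set.Icc (0:ℝ) K × Set.Icc (0:ℝ) K => b ↑q.1) (ν t) := by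
      intro t
      haveI := hνP t
      exact (hbR.comp continuous_fst).integrable_of_hasCompactSupport
        (HasCompactSupport.of_compactSpace _)
    have intc : ∀ t, Integrable (fun q : Set.Icc (0:ℝ) K × Set.Icc (0:ℝ) K => c ↑q.2) (ν t) := by
      intro t
      haveI := hνP t
      exact (hcR.comp continuous_snd).integrable_of_hasCompactSupport
        (HasCompactSupport.of_compactSpace _)
    have intp : ∀ t, Integrable (fun q : Set.Icc (0:ℝ) K × Set.Icc (0:ℝ) K => p q.2) (ν t) := by
      intro t
      haveI := hνP t
      exact (hpcont.comp continuous_snd).integrable_of_hasCompactSupport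
        (HasCompactSupport.of_compactSpace _)
    set P : ℕ → ℝ := fun t => ∫ q, p q.2 ∂ν t with hPdef
    have hP0 : ∀ t, 0 ≤ P t := fun t => integral_nonneg fun q => (hpbound q.2).1
    have hP1 : ∀ t, P t ≤ 1 := by
      intro t
      haveI := hνP t
      calc P t ≤ ∫ _, (1:ℝ) ∂ν t :=
            integral_mono (intp t) (integrable_const 1) fun q => (hpbound q.2).2
        _ = 1 := by simp
    -- marginal of ν 0
    have hmap0 : (ν 0).map Prod.fst = σX0 := by
      ext E hE
      rw [Measure.map_apply measurable_fst hE, ← Set.prod_univ]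
      exact hν0 E hE
    have hB0 : (∫ q, b ↑q.1 ∂ν 0) = p0 * b K := by
      have h := integral_map (μ := ν 0) measurable_fst.aemeasurable
        (f := fun s : Set.Icc (0:ℝ) K => b ↑s) hbSM.aestronglyMeasurable
      rw [← h, hmap0, hintσX0]
    -- marginal of ν (t+1)
    have hmapS : ∀ t, (ν (t+1)).map Prod.fst
        = ENNReal.ofReal (P t) • Measure.dirac (⟨K, Set.right_mem_Icc.mpr hK.le⟩ : Set.Icc (0:ℝ) K)
          + ENNReal.ofReal (1 - P t) • Measure.dirac (⟨0, Set.left_mem_Icc.mpr hK.le⟩ : Set.Icc (0:ℝ) K) := by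
      intro t
      haveI := hνP t
      have hmp : Measurable fun q : Set.Icc (0:ℝ) K × Set.Icc (0:ℝ) K =>
          ENNReal.ofReal (p q.2) := ENNReal.measurable_ofReal.comp
            (hpcont.comp continuous_snd).measurable
      have hip : ∫⁻ q, ENNReal.ofReal (p q.2) ∂ν t = ENNReal.ofReal (P t) :=
        (ofReal_integral_eq_lintegral_ofReal (intp t)
          (Filter.Eventually.of_forall fun q => (hpbound q.2).1)).symm
      have hip' : ∫⁻ q, ENNReal.ofReal (1 - p q.2) ∂ν t = ENNReal.ofReal (1 - P t) := by
        have hint1 : Integrable (fun q : Set.Icc (0:ℝ) K × Set.Icc (0:ℝ) K => 1 - p q.2) (ν t) :=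
          (integrable_const 1).sub (intp t)
        rw [← ofReal_integral_eq_lintegral_ofReal hint1
          (Filter.Eventually.of_forall fun q => by show (0:ℝ) ≤ 1 - p q.2; linarith [(hpbound q.2).2])]
        congr 1
        rw [integral_sub (integrable_const 1) (intp t), integral_const]
        simp
        rfl
      ext E hE
      rw [Measure.map_apply measurable_fst hE, ← Set.prod_univ, hνrec t E hE]
      calc ∫⁻ q, σX q E ∂ν t
          = ∫⁻ q, (ENNReal.ofReal (p q.2)
              * Measure.dirac (⟨K, Set.right_mem_Icc.mpr hK.le⟩ : Set.Icc (0:ℝ) K) E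
              + ENNReal.ofReal (1 - p q.2)
              * Measure.dirac (⟨0, Set.left_mem_Icc.mpr hK.le⟩ : Set.Icc (0:ℝ) K) E) ∂ν t := by
            refine lintegral_congr fun q => ?_
            rw [hσX q]
            simp
        _ = (∫⁻ q, ENNReal.ofReal (p q.2) ∂ν t)
              * Measure.dirac (⟨K, Set.right_mem_Icc.mpr hK.le⟩ : Set.Icc (0:ℝ) K) E
            + (∫⁻ q, ENNReal.ofReal (1 - p q.2) ∂ν t)
              * Measure.dirac (⟨0, Set.left_mem_Icc.mpr hK.le⟩ : Set.Icc (0:ℝ) K) E := by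
            rw [lintegral_add_left (hmp.mul_const _), lintegral_mul_const _ hmp,
              lintegral_mul_const]
            exact (measurable_const.sub
              (hpcont.comp continuous_snd).measurable).ennreal_ofReal
        _ = _ := by
            rw [hip, hip']
            simp
    have hBS : ∀ t, (∫ q, b ↑q.1 ∂ν (t+1)) = P t * b K := by
      intro t
      have h := integral_map (μ := ν (t+1)) measurable_fst.aemeasurable
        (f := fun s : Set.Icc (0:ℝ) K => b ↑s) hbSM.aestronglyMeasurable
      rw [← h, hmapS t, my_twoPoint_integral hbSM (hP0 t) (by linarith [hP1 t]) _ _]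
      simp [hb0]
    -- value of the cost integral
    have hCval : ∀ t, ∫ q, lam * c ↑q.2 ∂ν t
        = lam ^ 2 * b K * P t - ((1 + lam) * γ - (1 - lam ^ 2) * b K * p0) := by
      intro t
      haveI := hνP t
      have hfe : (fun q : Set.Icc (0:ℝ) K × Set.Icc (0:ℝ) K => lam * c ↑q.2)
          = fun q => lam ^ 2 * b K * p q.2 - ((1 + lam) * γ - (1 - lam ^ 2) * b K * p0) :=
        funext fun q => by linarith [keyE q.2]
      rw [hfe, integral_sub ((intp t).const_mul _) (integrable_const _),
        integral_const_mul, integral_const]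
      simp [hPdef]
    have hI : ∀ t, ∫ q, (b ↑q.1 + lam * (-(c ↑q.2))) ∂ν t
        = (∫ q, b ↑q.1 ∂ν t) - lam ^ 2 * b K * P t
          + ((1 + lam) * γ - (1 - lam ^ 2) * b K * p0) := by
      intro t
      have h1 : (fun q : Set.Icc (0:ℝ) K × Set.Icc (0:ℝ) K => b ↑q.1 + lam * (-(c ↑q.2)))
          = fun q => b ↑q.1 - lam * c ↑q.2 := by
        funext q; ring
      rw [h1, integral_sub (intb t) ((intc t).const_mul lam), hCval t]
      ring
    -- the sequence of marginal benefit values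
    set a : ℕ → ℝ := fun t => Nat.rec (p0 * b K) (fun n _ => P n * b K) t with hadef
    have ha : ∀ t, (∫ q, b ↑q.1 ∂ν t) = a t := by
      intro t
      cases t with
      | zero => exact hB0
      | succ n => exact hBS n
    have hab : ∀ t, 0 ≤ a t ∧ a t ≤ b K := by
      intro t
      cases t with
      | zero =>
        refine ⟨mul_nonneg hp00 hbK.le, ?_⟩
        show p0 * b K ≤ b K
        nlinarith
      | succ n =>
        refine ⟨mul_nonneg (hP0 n) hbK.le, ?_⟩
        show P n * b K ≤ b K
        nlinarith [hP0 n, hP1 n]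
    set D : ℝ := (1 + lam) * γ - (1 - lam ^ 2) * b K * p0 with hDdef
    have hI' : ∀ t, ∫ q, (b ↑q.1 + lam * (-(c ↑q.2))) ∂ν t = a t - lam ^ 2 * a (t+1) + D := by
      intro t
      rw [hI t, ha t]
      have h2 : a (t+1) = P t * b K := rfl
      rw [h2]
      ring
    have hl2nonneg : (0:ℝ) ≤ lam ^ 2 := hlam2.le
    have hl2lt : lam ^ 2 < 1 := by nlinarith
    have hgeo : Summable fun t : ℕ => (lam ^ 2) ^ t := summable_geometric_of_lt_one hl2nonneg hl2lt
    have hs_g : Summable fun t : ℕ => (lam ^ 2) ^ t * a t := by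
      refine Summable.of_norm_bounded (hgeo.mul_right (b K)) fun t => ?_
      rw [Real.norm_eq_abs, abs_mul, abs_of_nonneg (by positivity), abs_of_nonneg (hab t).1]
      exact mul_le_mul_of_nonneg_left (hab t).2 (by positivity)
    have hs_h : Summable fun t : ℕ => (lam ^ 2) ^ t * a (t+1) := by
      refine Summable.of_norm_bounded (hgeo.mul_right (b K)) fun t => ?_
      rw [Real.norm_eq_abs, abs_mul, abs_of_nonneg (by positivity), abs_of_nonneg (hab (t+1)).1]
      exact mul_le_mul_of_nonneg_left (hab (t+1)).2 (by positivity)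
    have htel : lam ^ 2 * ∑' t, (lam ^ 2) ^ t * a (t+1)
        = (∑' t, (lam ^ 2) ^ t * a t) - a 0 := by
      have h1 : (∑' t, (lam ^ 2) ^ t * a t) = a 0 + ∑' t, (lam ^ 2) ^ (t+1) * a (t+1) := by
        have := Summable.tsum_eq_zero_add hs_g
        simpa using this
      have h2 : (∑' t, (lam ^ 2) ^ (t+1) * a (t+1))
          = ∑' t, lam ^ 2 * ((lam ^ 2) ^ t * a (t+1)) := by
        refine tsum_congr fun t => ?_
        rw [pow_succ]
        ring
      rw [h1, h2, tsum_mul_left]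
      ring
    have hsum_eq : (∑' t : ℕ, lam ^ (2 * t) * ∫ q, (b ↑q.1 + lam * (-(c ↑q.2))) ∂ν t)
        = ∑' t : ℕ, (((lam ^ 2) ^ t * a t - lam ^ 2 * ((lam ^ 2) ^ t * a (t+1)))
            + (lam ^ 2) ^ t * D) := by
      refine tsum_congr fun t => ?_
      rw [hI' t, pow_mul]
      ring
    rw [hsum_eq, Summable.tsum_add (hs_g.sub (hs_h.mul_left _)) (hgeo.mul_right D),
      Summable.tsum_sub hs_g (hs_h.mul_left _), tsum_mul_left, tsum_mul_right,
      tsum_geometric_of_lt_one hl2nonneg hl2lt, htel]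
    have ha0 : a 0 = p0 * b K := rfl
    rw [ha0, hDdef]
    have hne : (1:ℝ) - lam ^ 2 ≠ 0 := h1l2.ne'
    field_simp
    ring
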